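/- arXiv:2201.11971 — 3 statements merged into one kernel-verified Lean document; each statement's English description precedes it below -/
import Mathlib

section
/- Let K be a field and let D be a finite-dimensional division algebra over K which is central over K (i.e. the center of D equals K) and whose dimension over K is p^2 for a prime number p. If a and b are elements of D that do not commute (a*b ≠ b*a), then the K-subalgebra of D generated by a and b is all of D. -/
open Module

/-- The finrank of a subalgebra of a finite-dimensional division algebra divides
the finrank of the whole algebra, since the subalgebra is itself a division ring
and the big algebra is a free module over it. -/
lemma finrank_subalgebra_dvd_aux {K D : Type*} [Field K] [DivisionRing D] [Algebra K D]
    [FiniteDimensional K D] (S : Subalgebra K D) :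
    finrank K S ∣ finrank K D := by
  letI : DivisionRing S := divisionRingOfFiniteDimensional K S
  exact ⟨finrank S D, (Module.finrank_mul_finrank K S D).symm⟩

lemma commute_of_mem_bot_aux {K D : Type*} [Field K] [DivisionRing D] [Algebra K D]
    {a : D} (ha : a ∈ (⊥ : Subalgebra K D)) (b : D) : a * b = b * a := by
  obtain ⟨x, rfl⟩ := Algebra.mem_bot.1 ha
  exact (Algebra.commutes x b)

/-- Let `K` be a field and `D` a finite-dimensional central division
algebra over `K` (the center of `D` equals `K`) with `dim_K D = p ^ 2` for a prime `p`.
If `a b : D` do not commute, then the `K`-subalgebra of `D` generated by `a` and `b`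
is all of `D`. -/
theorem adjoin_eq_top_of_not_commute
    (K D : Type*) [Field K] [DivisionRing D] [Algebra K D] [FiniteDimensional K D]
    (hcenter : Subalgebra.center K D = ⊥)
    (p : ℕ) (hp : p.Prime) (hdim : Module.finrank K D = p ^ 2)
    (a b : D) (hab : a * b ≠ b * a) :
    Algebra.adjoin K ({a, b} : Set D) = ⊤ := by
  set E := Algebra.adjoin K ({a, b} : Set D) with hE
  have haE : a ∈ E := Algebra.subset_adjoin (by simp)
  have hbE : b ∈ E := Algebra.subset_adjoin (by simp)
  have hdvdE : finrank K E ∣ p ^ 2 := hdim ▸ finrank_subalgebra_dvd_aux E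
  obtain ⟨k, hk, hkE⟩ := (Nat.dvd_prime_pow hp).1 hdvdE
  interval_cases k
  · -- finrank E = 1, so E = ⊥ and a commutes with b
    have hbotE : E = ⊥ := Subalgebra.eq_bot_of_finrank_one (by simpa using hkE)
    exact absurd (commute_of_mem_bot_aux (hbotE ▸ haE) b) hab
  · -- finrank E = p
    rw [pow_one] at hkE
    set F := Algebra.adjoin K ({a} : Set D) with hF
    have hFE : F ≤ E := Algebra.adjoin_mono (by simp)
    have hdvdF : finrank K F ∣ p ^ 2 := hdim ▸ finrank_subalgebra_dvd_aux F
    have hle : finrank K F ≤ finrank K E :=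
      Submodule.finrank_mono (Subalgebra.toSubmodule.monotone hFE)
    have hF1 : finrank K F ≠ 1 := by
      intro h1
      have hbotF : F = ⊥ := Subalgebra.eq_bot_of_finrank_one h1
      have haF : a ∈ F := Algebra.subset_adjoin (by simp)
      exact absurd (commute_of_mem_bot_aux (hbotF ▸ haF) b) hab
    obtain ⟨j, hj, hjF⟩ := (Nat.dvd_prime_pow hp).1 hdvdF
    have hj1 : j = 1 := by
      interval_cases j
      · exact absurd (by simpa using hjF) hF1
      · rfl
      · exfalso
        rw [hjF, hkE] at hle
        have := hp.two_le
        nlinarith [hle]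
    rw [hj1, pow_one] at hjF
    have hFEeq : F = E := by
      have : Subalgebra.toSubmodule F = Subalgebra.toSubmodule E :=
        Submodule.eq_of_le_of_finrank_eq (Subalgebra.toSubmodule.monotone hFE) (by rw [Subalgebra.finrank_toSubmodule, Subalgebra.finrank_toSubmodule, hjF, hkE])
      exact Subalgebra.toSubmodule_injective this
    have hbF : b ∈ F := hFEeq ▸ hbE
    exact absurd (Algebra.commute_of_mem_adjoin_self hbF).eq hab
  · -- finrank E = p ^ 2 = finrank D
    have : Subalgebra.toSubmodule E = ⊤ :=
      Submodule.eq_top_of_finrank_eq (by rw [Subalgebra.finrank_toSubmodule, hkE, hdim])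
    exact Algebra.toSubmodule_eq_top.1 this
end

section
/- Let K be a field and let D be a finite-dimensional division algebra over K which is central over K and whose dimension over K is p^2 for a prime number p. Then every K-subalgebra B of D with B ≠ D is commutative. -/
open Module

/-- The `K`-dimension of a subalgebra of a finite-dimensional domain divides the
`K`-dimension of the whole algebra. -/
theorem aux_finrank_subalgebra_dvd
    (K D : Type*) [Field K] [Ring D] [IsDomain D] [Algebra K D] [FiniteDimensional K D]
    (E : Subalgebra K D) : Module.finrank K E ∣ Module.finrank K D := by
  letI := divisionRingOfFiniteDimensional K E
  exact ⟨Module.finrank E D, (finrank_mul_finrank K E D).symm⟩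

/-- Let `K` be a field and `D` a finite-dimensional central division
algebra over `K` (the center of `D` equals `K`) with `dim_K D = p ^ 2` for a prime `p`.
Then every `K`-subalgebra `B ≠ D` of `D` is commutative. -/
theorem proper_subalgebra_commutative
    (K D : Type*) [Field K] [DivisionRing D] [Algebra K D] [FiniteDimensional K D]
    (hcenter : Subalgebra.center K D = ⊥)
    (p : ℕ) (hp : p.Prime) (hdim : Module.finrank K D = p ^ 2)
    (B : Subalgebra K D) (hB : B ≠ ⊤) :
    ∀ x ∈ B, ∀ y ∈ B, x * y = y * x := by
  intro x hx y hy
  by_contra hxy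
  -- the centralizer of `x` inside `B`
  set C : Subalgebra K D := B ⊓ Subalgebra.centralizer K {x} with hC
  have hxC : x ∈ C := ⟨hx, Subalgebra.mem_centralizer_iff K |>.2 (by rintro g rfl; rfl)⟩
  have hyC : y ∉ C := by
    rintro ⟨-, hy2⟩
    exact hxy (Subalgebra.mem_centralizer_iff K |>.1 hy2 x rfl)
  have hCB : C < B := lt_of_le_of_ne inf_le_left (fun h => hyC (h ▸ hy))
  -- dimension facts
  have hBdvd : finrank K B ∣ p ^ 2 := hdim ▸ aux_finrank_subalgebra_dvd K D B
  have hCdvd : finrank K C ∣ p ^ 2 := hdim ▸ aux_finrank_subalgebra_dvd K D C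
  have hCltB : finrank K C < finrank K B := by
    rw [← Subalgebra.finrank_toSubmodule, ← Subalgebra.finrank_toSubmodule]
    exact Submodule.finrank_lt_finrank_of_lt (by exact_mod_cast hCB)
  have hBlt : finrank K B < p ^ 2 := by
    rcases lt_or_eq_of_le (hdim ▸ Submodule.finrank_le (Subalgebra.toSubmodule B)) with h | h
    · exact h
    · exact absurd (Algebra.toSubmodule_eq_top.1 (Submodule.eq_top_of_finrank_eq
        (h.trans hdim.symm))) hB
  obtain ⟨i, hi, hBi⟩ := (Nat.dvd_prime_pow hp).1 hBdvd
  obtain ⟨j, hj, hCj⟩ := (Nat.dvd_prime_pow hp).1 hCdvd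
  -- from `p ^ j < p ^ i < p ^ 2` we get `j = 0`
  have hilt : i < 2 := by
    rw [hBi] at hBlt; exact (pow_lt_pow_iff_right₀ hp.one_lt).1 hBlt
  have hjlt : j < i := by
    rw [hBi, hCj] at hCltB; exact (pow_lt_pow_iff_right₀ hp.one_lt).1 hCltB
  have hj0 : j = 0 := by omega
  have hC1 : finrank K C = 1 := by rw [hCj, hj0, pow_zero]
  have hCbot : C = ⊥ := Subalgebra.eq_bot_of_finrank_one hC1
  rw [hCbot, Algebra.mem_bot] at hxC
  obtain ⟨k, rfl⟩ := hxC
  exact hxy (Algebra.commutes k y)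
end

section
/- Let p be a prime number and let Δ be a finite-dimensional division algebra over ℚ whose center K satisfies [K:ℚ] = 2 and with dim_K Δ = p^2. Suppose there is an isomorphism of ℝ-algebras α : Δ ⊗_ℚ ℝ ≅ M_p(ℂ) (the p×p complex matrices, viewed as an ℝ-algebra). Let g₁, g₂ ∈ Δ with g₁·g₂ ≠ g₂·g₁. Then every ℂ-linear subspace H of ℂ^p satisfying α(g₁ ⊗ 1)·H ⊆ H and α(g₂ ⊗ 1)·H ⊆ H is either the zero subspace or all of ℂ^p. -/
open scoped TensorProduct

open Module

lemma finrank_subalg_mul (K Δ : Type*) [Field K] [DivisionRing Δ] [Algebra K Δ]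
    [FiniteDimensional K Δ] (S : Subalgebra K Δ) :
    finrank K ↥S * finrank ↥S Δ = finrank K Δ := by
  letI : DivisionRing ↥S := divisionRingOfFiniteDimensional K ↥S
  exact Module.finrank_mul_finrank K ↥S Δ

lemma adjoin_pair_eq_top {p : ℕ} (hp : p.Prime) (K Δ : Type*) [Field K] [DivisionRing Δ]
    [Algebra K Δ] [FiniteDimensional K Δ] (hdim : finrank K Δ = p ^ 2)
    (g₁ g₂ : Δ) (hg : g₁ * g₂ ≠ g₂ * g₁) :
    Algebra.adjoin K {g₁, g₂} = ⊤ := by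
  have key : ∀ T : Subalgebra K Δ, finrank K ↥T = 1 ∨ finrank K ↥T = p ∨ finrank K ↥T = p ^ 2 := by
    intro T
    have hdvd : finrank K ↥T ∣ p ^ 2 := by
      rw [← hdim, ← finrank_subalg_mul K Δ T]; exact Dvd.intro _ rfl
    obtain ⟨k, hk, hEq⟩ := (Nat.dvd_prime_pow hp).mp hdvd
    interval_cases k
    · left; simpa using hEq
    · right; left; simpa using hEq
    · right; right; exact hEq
  have hcase : ∀ T : Subalgebra K Δ, finrank K ↥T = p ^ 2 → T = ⊤ := by
    intro T hT
    exact Subalgebra.eq_of_le_of_finrank_eq le_top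
      (by rw [subalgebra_top_finrank_eq_submodule_top_finrank, finrank_top, hdim, hT])
  set S := Algebra.adjoin K ({g₁, g₂} : Set Δ) with hS
  have hg₁S : g₁ ∈ S := Algebra.subset_adjoin (by simp)
  have hg₂S : g₂ ∈ S := Algebra.subset_adjoin (by simp)
  have hg₁bot : g₁ ∉ (⊥ : Subalgebra K Δ) := by
    intro hb
    obtain ⟨k, hk⟩ := Algebra.mem_bot.mp hb
    exact hg (by rw [← hk, Algebra.commutes])
  set L := Algebra.adjoin K ({g₁} : Set Δ) with hL
  have hLS : L ≤ S := Algebra.adjoin_mono (by simp)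
  have hLne : L ≠ ⊥ := by
    intro h
    exact hg₁bot (h ▸ Algebra.subset_adjoin (by simp))
  have hLnot : finrank K ↥L ≠ 1 := fun h => hLne (Subalgebra.eq_bot_of_finrank_one h)
  have hLcomm : ∀ x ∈ L, x * g₁ = g₁ * x := fun x hx =>
    (Algebra.commute_of_mem_adjoin_self hx).symm.eq
  have hLnetop : finrank K ↥L ≠ p ^ 2 := by
    intro h
    have : L = ⊤ := hcase L h
    exact hg ((hLcomm g₂ (this ▸ Algebra.mem_top)).symm)
  have hLrank : finrank K ↥L = p := by
    rcases key L with h | h | h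
    · exact absurd h hLnot
    · exact h
    · exact absurd h hLnetop
  rcases key S with h | h | h
  · exact absurd (Subalgebra.eq_bot_of_finrank_one h ▸ hg₁S : g₁ ∈ (⊥ : Subalgebra K Δ)) hg₁bot
  · have : L = S := Subalgebra.eq_of_le_of_finrank_eq hLS (by rw [hLrank, h])
    exact absurd ((hLcomm g₂ (this ▸ hg₂S)).symm) hg
  · exact hcase S h


/-- Let `p` be a prime and `Δ` a finite-dimensional division algebra
over `ℚ` whose center `K` satisfies `[K : ℚ] = 2` and `dim_K Δ = p ^ 2`.  Suppose
`α : Δ ⊗_ℚ ℝ ≅ M_p(ℂ)` is an isomorphism of `ℝ`-algebras.  If `g₁ g₂ ∈ Δ` do not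
commute, then every `ℂ`-subspace `H ⊆ ℂ^p` stable under the matrices `α (g₁ ⊗ 1)`
and `α (g₂ ⊗ 1)` is either `⊥` or `⊤`. -/
theorem invariant_subspace_trivial_of_not_commute
    (p : ℕ) (hp : p.Prime)
    (Δ : Type*) [DivisionRing Δ] [Algebra ℚ Δ] [FiniteDimensional ℚ Δ]
    (hK : Module.finrank ℚ (Subalgebra.center ℚ Δ) = 2)
    (hdim : Module.finrank (Subalgebra.center ℚ Δ) Δ = p ^ 2)
    (α : (ℝ ⊗[ℚ] Δ) ≃ₐ[ℝ] Matrix (Fin p) (Fin p) ℂ)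
    (g₁ g₂ : Δ) (hg : g₁ * g₂ ≠ g₂ * g₁)
    (H : Submodule ℂ (Fin p → ℂ))
    (h₁ : ∀ v ∈ H, (α ((1 : ℝ) ⊗ₜ[ℚ] g₁)).mulVec v ∈ H)
    (h₂ : ∀ v ∈ H, (α ((1 : ℝ) ⊗ₜ[ℚ] g₂)).mulVec v ∈ H) :
    H = ⊥ ∨ H = ⊤ := by
  classical
  letI : Field ↥(Subalgebra.center ℚ Δ) := inferInstanceAs (Field ↥(Subring.center Δ))
  letI : Algebra ↥(Subalgebra.center ℚ Δ) Δ := Algebra.ofModule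
    (fun k x y => by change (↑k * x) * y = ↑k * (x * y); rw [mul_assoc])
    (fun k x y => by
      change x * (↑k * y) = ↑k * (x * y)
      rw [← mul_assoc, Subalgebra.mem_center_iff.mp k.2 x, mul_assoc])
  haveI : FiniteDimensional ↥(Subalgebra.center ℚ Δ) Δ :=
    FiniteDimensional.right ℚ ↥(Subalgebra.center ℚ Δ) Δ
  have htop : Algebra.adjoin ↥(Subalgebra.center ℚ Δ) {g₁, g₂} = ⊤ :=
    adjoin_pair_eq_top hp ↥(Subalgebra.center ℚ Δ) Δ hdim g₁ g₂ hg
  -- matrix image of elements of Δ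
  have hAmul : ∀ a b : Δ,
      α ((1:ℝ) ⊗ₜ[ℚ] (a * b)) = α ((1:ℝ) ⊗ₜ[ℚ] a) * α ((1:ℝ) ⊗ₜ[ℚ] b) := by
    intro a b
    rw [← map_mul, Algebra.TensorProduct.tmul_mul_tmul, one_mul]
  -- elements of the center map to scalar matrices
  have hscalar : ∀ k : ↥(Subalgebra.center ℚ Δ),
      ∃ c : ℂ, α ((1:ℝ) ⊗ₜ[ℚ] (k : Δ)) = c • (1 : Matrix (Fin p) (Fin p) ℂ) := by
    intro k
    have hcomm : ∀ N : Matrix (Fin p) (Fin p) ℂ, Commute N (α ((1:ℝ) ⊗ₜ[ℚ] (k : Δ))) := by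
      intro N
      have hx : ∀ x : ℝ ⊗[ℚ] Δ,
          x * ((1:ℝ) ⊗ₜ[ℚ] (k : Δ)) = ((1:ℝ) ⊗ₜ[ℚ] (k : Δ)) * x := by
        intro x
        induction x using TensorProduct.induction_on with
        | zero => simp
        | tmul r d =>
          rw [Algebra.TensorProduct.tmul_mul_tmul, Algebra.TensorProduct.tmul_mul_tmul,
            one_mul, mul_one, Subalgebra.mem_center_iff.mp k.2 d]
        | add x y hx hy => rw [mul_add, add_mul, hx, hy]
      have hN : N = α (α.symm N) := (α.apply_symm_apply N).symm
      rw [Commute, SemiconjBy, hN, ← map_mul, ← map_mul, hx]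
    obtain ⟨c, hc⟩ := Matrix.mem_range_scalar_of_commute_single
      (fun i j _ => hcomm (Matrix.single i j 1))
    refine ⟨c, ?_⟩
    rw [← hc]
    ext i j
    simp [Matrix.scalar_apply, Matrix.one_apply, Matrix.diagonal]
  -- the set of d ∈ Δ whose matrix stabilizes H is a subalgebra over the center
  let S : Subalgebra ↥(Subalgebra.center ℚ Δ) Δ :=
    { carrier := {d : Δ | ∀ v ∈ H, (α ((1:ℝ) ⊗ₜ[ℚ] d)).mulVec v ∈ H}
      mul_mem' := by
        intro a b ha hb v hv
        rw [hAmul, ← Matrix.mulVec_mulVec]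
        exact ha _ (hb _ hv)
      one_mem' := by
        intro v hv
        have h1 : α ((1:ℝ) ⊗ₜ[ℚ] (1:Δ)) = 1 := by
          rw [← Algebra.TensorProduct.one_def, map_one]
        rw [h1, Matrix.one_mulVec]
        exact hv
      add_mem' := by
        intro a b ha hb v hv
        have : ((1:ℝ) ⊗ₜ[ℚ] (a + b) : ℝ ⊗[ℚ] Δ) = (1:ℝ) ⊗ₜ[ℚ] a + (1:ℝ) ⊗ₜ[ℚ] b :=
          TensorProduct.tmul_add _ _ _
        rw [this, map_add, Matrix.add_mulVec]
        exact H.add_mem (ha v hv) (hb v hv)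
      algebraMap_mem' := by
        intro k v hv
        have h1 : (algebraMap ↥(Subalgebra.center ℚ Δ) Δ) k = (k : Δ) := by
          rw [Algebra.algebraMap_eq_smul_one]
          show (k : Δ) * 1 = (k : Δ)
          rw [mul_one]
        obtain ⟨c, hc⟩ := hscalar k
        rw [h1, hc, Matrix.smul_mulVec, Matrix.one_mulVec]
        exact H.smul_mem c hv }
  have hall : ∀ d : Δ, ∀ v ∈ H, (α ((1:ℝ) ⊗ₜ[ℚ] d)).mulVec v ∈ H := by
    intro d
    have hle : Algebra.adjoin ↥(Subalgebra.center ℚ Δ) {g₁, g₂} ≤ S := by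
      apply Algebra.adjoin_le
      rintro x (rfl | rfl)
      · exact h₁
      · exact h₂
    exact hle (htop ▸ Algebra.mem_top)
  -- every matrix stabilizes H
  have hfull : ∀ M : Matrix (Fin p) (Fin p) ℂ, ∀ v ∈ H, M.mulVec v ∈ H := by
    have hx : ∀ x : ℝ ⊗[ℚ] Δ, ∀ v ∈ H, (α x).mulVec v ∈ H := by
      intro x
      induction x using TensorProduct.induction_on with
      | zero =>
        intro v hv
        rw [map_zero, Matrix.zero_mulVec]
        exact H.zero_mem
      | tmul r d =>
        intro v hv
        have h1 : (r ⊗ₜ[ℚ] d : ℝ ⊗[ℚ] Δ) = r • ((1:ℝ) ⊗ₜ[ℚ] d) := by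
          rw [TensorProduct.smul_tmul', smul_eq_mul, mul_one]
        rw [h1, map_smul, Matrix.smul_mulVec]
        have h2 : r • ((α ((1:ℝ) ⊗ₜ[ℚ] d)).mulVec v)
            = ((r : ℂ)) • ((α ((1:ℝ) ⊗ₜ[ℚ] d)).mulVec v) := by
          funext i
          simp [Complex.real_smul]
        rw [h2]
        exact H.smul_mem _ (hall d v hv)
      | add x y hx hy =>
        intro v hv
        rw [map_add, Matrix.add_mulVec]
        exact H.add_mem (hx v hv) (hy v hv)
    intro M v hv
    have := hx (α.symm M) v hv
    rwa [α.apply_symm_apply] at this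
  by_cases hbot : H = ⊥
  · exact Or.inl hbot
  · right
    obtain ⟨v, hvH, hv0⟩ := Submodule.ne_bot_iff H |>.mp hbot
    obtain ⟨i, hi⟩ : ∃ i, v i ≠ 0 := by
      by_contra h
      push_neg at h
      exact hv0 (funext h)
    rw [eq_top_iff]
    intro w _
    have hM : (Matrix.of fun j k => if k = i then w j * (v i)⁻¹ else 0 :
        Matrix (Fin p) (Fin p) ℂ).mulVec v = w := by
      funext j
      simp only [Matrix.mulVec, dotProduct, Matrix.of_apply, ite_mul, zero_mul]
      rw [Finset.sum_ite_eq' Finset.univ i fun k => w j * (v i)⁻¹ * v k]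
      simp [mul_assoc, inv_mul_cancel₀ hi]
    exact hM ▸ hfull _ v hvH
end
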